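/- For every k ≥ 2 and every i ≥ 1 there exists an undirected forest (in fact, a tree) F on n = k(2i−1)+1 vertices admitting a branching k-path vertex cover of size exactly i+1 = (n + 3k − 1)/(2k); hence the lower bound (n+3k−1)/(2k) is tight for undirected forests. -/

import Mathlib

/-- A rooted directed forest on vertex type `V`, given by a parent map
(edges are oriented from parent to child, i.e. away from the roots),
with no directed cycles. A root is a vertex with no parent. -/
structure RDForest (V : Type) where
  parent : V → Option V
  acyclic : ∀ v : V, ¬ Relation.TransGen (fun a b => parent b = some a) v v

namespace RDForest

variable {V : Type}

/-- Out-degree of a vertex: its number of children. -/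
noncomputable def outDeg (F : RDForest V) (v : V) : ℕ :=
  Nat.card {w | F.parent w = some v}

/-- A leaf is a vertex of out-degree 0. -/
def IsLeaf (F : RDForest V) (v : V) : Prop := F.outDeg v = 0

/-- A branching vertex is a vertex of out-degree at least 2. -/
def IsBranching (F : RDForest V) (v : V) : Prop := 2 ≤ F.outDeg v

/-- `p 0, p 1, …, p (k-1)` is a directed path on `k` vertices
(each successive vertex is a child of the previous one). -/
def IsDPath (F : RDForest V) (k : ℕ) (p : ℕ → V) : Prop :=
  ∀ i, i + 1 < k → F.parent (p (i + 1)) = some (p i)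

/-- A branching `k`-path vertex cover of a rooted directed forest:
all leaves belong to `P`, and every directed path on `k` vertices contains
a branching vertex or a vertex of `P`. -/
def IsBPVC (F : RDForest V) (k : ℕ) (P : Set V) : Prop :=
  (∀ v, F.IsLeaf v → v ∈ P) ∧
  ∀ p : ℕ → V, F.IsDPath k p →
    (∃ i < k, F.IsBranching (p i)) ∨ (∃ i < k, p i ∈ P)

end RDForest

namespace SimpleGraph

variable {V : Type}

/-- Degree of a vertex in an undirected graph. -/
noncomputable def udeg (G : SimpleGraph V) (v : V) : ℕ := Nat.card {w | G.Adj v w}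

/-- `p 0, …, p (k-1)` is a path on `k` vertices: consecutive vertices
are adjacent and all `k` vertices are distinct. -/
def IsUPath (G : SimpleGraph V) (k : ℕ) (p : ℕ → V) : Prop :=
  (∀ i, i + 1 < k → G.Adj (p i) (p (i + 1))) ∧
  (∀ i j, i < k → j < k → p i = p j → i = j)

/-- A branching `k`-path vertex cover of an undirected graph: all vertices of
degree at most 1 belong to `P`, and every path on `k` vertices contains a vertex
of degree at least 3 (a branching vertex) or a vertex of `P`. -/
def IsBPVC (G : SimpleGraph V) (k : ℕ) (P : Set V) : Prop :=
  (∀ v, G.udeg v ≤ 1 → v ∈ P) ∧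
  ∀ p : ℕ → V, G.IsUPath k p →
    (∃ i < k, 3 ≤ G.udeg (p i)) ∨ (∃ i < k, p i ∈ P)

end SimpleGraph


open SimpleGraph

open SimpleGraph


/-- A graph whose adjacency comes from a parent map with a strictly decreasing
height is a tree. -/
lemma tree_of_parent {V : Type} [Nonempty V] (G : SimpleGraph V) (root : V)
    (pr : V → V) (h : V → ℕ)
    (hpr_root : pr root = root)
    (hdec : ∀ v, v ≠ root → h (pr v) < h v)
    (hadj : ∀ u v, G.Adj u v ↔ u ≠ v ∧ (pr u = v ∨ pr v = u)) :
    G.IsTree := by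
  have hadj_pr : ∀ v, v ≠ root → G.Adj v (pr v) := by
    intro v hv
    rw [hadj]
    refine ⟨fun hc => absurd (hdec v hv) (by rw [← hc]; omega), Or.inl rfl⟩
  have hmon : ∀ (n : ℕ) (x : V), h (pr^[n] x) ≤ h x := by
    intro n
    induction n with
    | zero => intro x; simp
    | succ n ih =>
      intro x
      rw [Function.iterate_succ_apply']
      by_cases hx : pr^[n] x = root
      · rw [hx, hpr_root, ← hx]; exact ih x
      · exact le_trans (le_of_lt (hdec _ hx)) (ih x)
  constructor
  · -- connected
    have reach : ∀ (n : ℕ) (v : V), h v = n → G.Reachable v root := by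
      intro n
      induction n using Nat.strong_induction_on with
      | _ n ih =>
        intro v hv
        by_cases hvr : v = root
        · exact hvr ▸ Reachable.refl _
        · exact (Adj.reachable (hadj_pr v hvr)).trans
            (ih (h (pr v)) (hv ▸ hdec v hvr) (pr v) rfl)
    exact ⟨fun u v => (reach _ u rfl).trans (reach _ v rfl).symm⟩
  · -- acyclic
    rw [isAcyclic_iff_forall_adj_isBridge]
    have key : ∀ u v : V, G.Adj u v → pr u = v → G.IsBridge s(u, v) := by
      intro u v huv hpu
      have hune : u ≠ root := by
        intro hu
        subst hu
        rw [hpr_root] at hpu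
        exact huv.ne hpu
      rw [isBridge_iff]
      intro hreach
      set D : Set V := {x | ∃ n, pr^[n] x = u} with hD
      have hvD : v ∉ D := by
        rintro ⟨n, hn⟩
        have h1 : h u ≤ h v := hn ▸ hmon n v
        have h2 : h v < h u := hpu ▸ hdec u hune
        omega
      have closure : ∀ x y : V, (G \ fromEdgeSet {s(u, v)}).Adj x y → x ∈ D → y ∈ D := by
        intro x y hxy hx
        obtain ⟨hxy', hne'⟩ := hxy
        have hnedge : s(x, y) ≠ s(u, v) := by
          intro hc
          exact hne' (by simp [fromEdgeSet_adj, hc, hxy'.ne])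
        rw [hadj] at hxy'
        obtain ⟨n, hn⟩ := hx
        rcases hxy'.2 with hp | hp
        · -- pr x = y
          cases n with
          | zero =>
            simp at hn
            subst hn
            rw [hpu] at hp
            exact absurd (by rw [hp]) hnedge
          | succ n =>
            exact ⟨n, by rw [← hp, ← Function.iterate_succ_apply, hn]⟩
        · -- pr y = x
          exact ⟨n + 1, by rw [Function.iterate_succ_apply, hp, hn]⟩
      have walkD : ∀ (x y : V), (G \ fromEdgeSet {s(u, v)}).Walk x y → x ∈ D → y ∈ D := by
        intro x y w
        induction w with
        | nil => exact id
        | cons ha _ ih => exact fun hx => ih (closure _ _ ha hx)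
      obtain ⟨w⟩ := hreach
      exact hvD (walkD u v w ⟨0, rfl⟩)
    intro u v huv
    rcases (hadj u v).mp huv |>.2 with hp | hp
    · exact key u v huv hp
    · rw [Sym2.eq_swap]
      exact key v u huv.symm hp

section Caterpillar

/-- Vertex support: spine `(0, t)` for `t ≤ (b+1)*k`, pendant `(j, t)` for
`1 ≤ j ≤ b`, `1 ≤ t ≤ k`. -/
def cS (k b : ℕ) : Finset (ℕ × ℕ) :=
  ({0} ×ˢ Finset.range ((b + 1) * k + 1)) ∪ ((Finset.Icc 1 b) ×ˢ (Finset.Icc 1 k))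

lemma mem_cS {k b : ℕ} {x : ℕ × ℕ} :
    x ∈ cS k b ↔ (x.1 = 0 ∧ x.2 ≤ (b + 1) * k) ∨
      (1 ≤ x.1 ∧ x.1 ≤ b ∧ 1 ≤ x.2 ∧ x.2 ≤ k) := by
  rcases x with ⟨a, t⟩
  simp only [cS, Finset.mem_union, Finset.mem_product, Finset.mem_singleton,
    Finset.mem_range, Finset.mem_Icc, Nat.lt_succ_iff]
  tauto

/-- Vertex type. -/
abbrev cV (k b : ℕ) : Type := {x : ℕ × ℕ // x ∈ cS k b}

instance (k b : ℕ) : Fintype (cV k b) := FinsetCoe.fintype _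
instance (k b : ℕ) : DecidableEq (cV k b) := Subtype.instDecidableEq

/-- Parent map on raw pairs. -/
def cPr0 (k : ℕ) (x : ℕ × ℕ) : ℕ × ℕ :=
  if x.1 = 0 then (0, x.2 - 1) else if x.2 ≤ 1 then (0, x.1 * k) else (x.1, x.2 - 1)

lemma cPr0_spine {k t : ℕ} : cPr0 k (0, t) = (0, t - 1) := by simp [cPr0]

lemma cPr0_tip {k a t : ℕ} (ha : a ≠ 0) (ht : t ≤ 1) : cPr0 k (a, t) = (0, a * k) := by
  simp only [cPr0]
  rw [if_neg ha, if_pos ht]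

lemma cPr0_step {k a t : ℕ} (ha : a ≠ 0) (ht : 2 ≤ t) : cPr0 k (a, t) = (a, t - 1) := by
  simp only [cPr0]
  rw [if_neg ha, if_neg (by omega)]

lemma cPr0_mem {k b : ℕ} {x : ℕ × ℕ} (hx : x ∈ cS k b) :
    cPr0 k x ∈ cS k b := by
  rw [mem_cS] at hx ⊢
  rcases x with ⟨a, t⟩
  unfold cPr0
  split_ifs with h1 h2
  · left
    refine ⟨rfl, ?_⟩
    rcases hx with ⟨_, h⟩ | ⟨h, _⟩ <;> simp_all <;> omega
  · left
    refine ⟨rfl, ?_⟩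
    rcases hx with ⟨h, _⟩ | ⟨_, hab, _, _⟩
    · exact absurd h h1
    · calc a * k ≤ b * k := Nat.mul_le_mul_right k hab
        _ ≤ (b + 1) * k := Nat.mul_le_mul_right k (by omega)
  · right
    rcases hx with ⟨h, _⟩ | ⟨h, hab, ht, htk⟩
    · exact absurd h h1
    · exact ⟨h, hab, by omega, by omega⟩

/-- Parent map on the vertex type. -/
def cPr (k b : ℕ) (v : cV k b) : cV k b :=
  ⟨cPr0 k v.1, cPr0_mem v.2⟩

/-- The caterpillar graph. -/
def cG (k b : ℕ) : SimpleGraph (cV k b) where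
  Adj u v := u ≠ v ∧ (cPr k b u = v ∨ cPr k b v = u)
  symm := ⟨fun u v ⟨h1, h2⟩ => ⟨h1.symm, h2.symm⟩⟩
  loopless := ⟨fun v h => h.1 rfl⟩

lemma cG_adj {k b : ℕ} (u v : cV k b) :
    (cG k b).Adj u v ↔ u ≠ v ∧ (cPr k b u = v ∨ cPr k b v = u) := Iff.rfl

def cRoot (k b : ℕ) : cV k b := ⟨(0, 0), by rw [mem_cS]; left; simp⟩

instance (k b : ℕ) : Nonempty (cV k b) := ⟨cRoot k b⟩

/-- Height. -/
def cH (k : ℕ) (v : cV k b) : ℕ := v.1.1 * k + v.1.2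

lemma cPr_dec {k b : ℕ} (hk : 1 ≤ k) (v : cV k b) (hv : v ≠ cRoot k b) :
    cH k (cPr k b v) < cH k v := by
  rcases v with ⟨⟨a, t⟩, hm⟩
  have hne : (a, t) ≠ ((0, 0) : ℕ × ℕ) := fun hc => hv (Subtype.ext hc)
  rw [mem_cS] at hm
  unfold cH cPr cPr0
  dsimp only
  split_ifs with h1 h2
  · subst h1
    simp only at hne ⊢
    have : t ≠ 0 := fun hc => hne (by simp [hc])
    omega
  · rcases hm with ⟨h, _⟩ | ⟨h, _, ht, _⟩
    · exact absurd h h1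
    · simp only
      omega
  · simp only
    rcases hm with ⟨h, _⟩ | ⟨h, _, ht, _⟩
    · exact absurd h h1
    · omega

lemma cPr_root {k b : ℕ} : cPr k b (cRoot k b) = cRoot k b := by
  apply Subtype.ext
  simp [cPr, cPr0, cRoot]

lemma cG_isTree {k b : ℕ} (hk : 1 ≤ k) : (cG k b).IsTree :=
  tree_of_parent (cG k b) (cRoot k b) (cPr k b) (cH k) cPr_root
    (fun v hv => cPr_dec hk v hv) (fun _ _ => Iff.rfl)

lemma cV_card {k b : ℕ} : Nat.card (cV k b) = (b + 1) * k + 1 + b * k := by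
  rw [Nat.card_eq_fintype_card]
  have : Fintype.card (cV k b) = (cS k b).card := Fintype.card_coe _
  rw [this]
  have hdisj : Disjoint ({0} ×ˢ Finset.range ((b + 1) * k + 1))
      ((Finset.Icc 1 b) ×ˢ (Finset.Icc 1 k)) := by
    rw [Finset.disjoint_left]
    rintro ⟨a, t⟩ h1 h2
    simp only [Finset.mem_product, Finset.mem_singleton, Finset.mem_Icc] at h1 h2
    omega
  rw [cS, Finset.card_union_of_disjoint hdisj, Finset.card_product, Finset.card_product]
  simp [Nat.card_Icc]

lemma two_le_ncard {α : Type} [Finite α] {s : Set α} {a b : α}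
    (ha : a ∈ s) (hb : b ∈ s) (hab : a ≠ b) : 2 ≤ Nat.card s := by
  rw [Nat.card_coe_set_eq]
  have h := Set.ncard_le_ncard
    (Set.insert_subset ha (Set.singleton_subset_iff.mpr hb)) (Set.toFinite s)
  rwa [Set.ncard_pair hab] at h

lemma three_le_ncard {α : Type} [Finite α] {s : Set α} {a b c : α}
    (ha : a ∈ s) (hb : b ∈ s) (hc : c ∈ s)
    (hab : a ≠ b) (hac : a ≠ c) (hbc : b ≠ c) : 3 ≤ Nat.card s := by
  rw [Nat.card_coe_set_eq]
  have hsub : ({a, b, c} : Set α) ⊆ s := by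
    intro x hx
    rcases hx with rfl | rfl | rfl
    exacts [ha, hb, hc]
  have h := Set.ncard_le_ncard hsub (Set.toFinite s)
  rwa [Set.ncard_insert_of_notMem (by simp [hab, hac]) (Set.toFinite _),
    Set.ncard_pair hbc] at h

lemma cPr_val {k b : ℕ} (v : cV k b) : (cPr k b v).1 = cPr0 k v.1 := rfl

/-- Junction vertices have degree at least 3. -/
lemma cDeg_junction {k b : ℕ} (hk : 2 ≤ k) {j : ℕ} (hj1 : 1 ≤ j) (hjb : j ≤ b)
    (v : cV k b) (hv : v.1 = (0, j * k)) : 3 ≤ (cG k b).udeg v := by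
  have hjk2 : 2 ≤ j * k := le_trans hk (Nat.le_mul_of_pos_left k hj1)
  have hjk1 : j * k + 1 ≤ (b + 1) * k := by
    have : (j + 1) * k ≤ (b + 1) * k := Nat.mul_le_mul_right k (by omega)
    rw [add_mul] at this
    omega
  have hm1 : ((0, j * k - 1) : ℕ × ℕ) ∈ cS k b := by
    rw [mem_cS]; left; exact ⟨rfl, by omega⟩
  have hm2 : ((0, j * k + 1) : ℕ × ℕ) ∈ cS k b := by
    rw [mem_cS]; left; exact ⟨rfl, hjk1⟩
  have hm3 : ((j, 1) : ℕ × ℕ) ∈ cS k b := by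
    rw [mem_cS]; right; exact ⟨hj1, hjb, le_refl 1, by omega⟩
  refine three_le_ncard (a := (⟨(0, j * k - 1), hm1⟩ : cV k b))
    (b := (⟨(0, j * k + 1), hm2⟩ : cV k b)) (c := (⟨(j, 1), hm3⟩ : cV k b))
    ?_ ?_ ?_ ?_ ?_ ?_
  · refine ⟨fun hc => ?_, Or.inl (Subtype.ext ?_)⟩
    · rw [Subtype.ext_iff, hv, Prod.mk.injEq] at hc
      omega
    · rw [cPr_val, hv]
      simp [cPr0]
  · refine ⟨fun hc => ?_, Or.inr (Subtype.ext ?_)⟩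
    · rw [Subtype.ext_iff, hv, Prod.mk.injEq] at hc
      omega
    · rw [cPr_val, hv]
      simp [cPr0]
  · refine ⟨fun hc => ?_, Or.inr (Subtype.ext ?_)⟩
    · rw [Subtype.ext_iff, hv, Prod.mk.injEq] at hc
      omega
    · rw [cPr_val, hv]
      simp only [cPr0]
      rw [if_neg (by omega), if_pos (le_refl 1)]
  · intro hc
    rw [Subtype.ext_iff, Prod.mk.injEq] at hc
    omega
  · intro hc
    rw [Subtype.ext_iff, Prod.mk.injEq] at hc
    omega
  · intro hc
    rw [Subtype.ext_iff, Prod.mk.injEq] at hc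
    omega

/-- Interior spine vertices have degree at least 2. -/
lemma cDeg_spine {k b : ℕ} (v : cV k b) (hv : v.1.1 = 0)
    (h1 : 1 ≤ v.1.2) (h2 : v.1.2 < (b + 1) * k) : 2 ≤ (cG k b).udeg v := by
  set t := v.1.2 with ht
  have hval : v.1 = (0, t) := by
    rw [← hv, ht]
  have hm1 : ((0, t - 1) : ℕ × ℕ) ∈ cS k b := by
    rw [mem_cS]; left; exact ⟨rfl, by omega⟩
  have hm2 : ((0, t + 1) : ℕ × ℕ) ∈ cS k b := by
    rw [mem_cS]; left; exact ⟨rfl, by omega⟩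
  refine two_le_ncard (a := (⟨(0, t - 1), hm1⟩ : cV k b))
    (b := (⟨(0, t + 1), hm2⟩ : cV k b)) ?_ ?_ ?_
  · refine ⟨fun hc => ?_, Or.inl (Subtype.ext ?_)⟩
    · rw [Subtype.ext_iff, hval, Prod.mk.injEq] at hc
      omega
    · rw [cPr_val, hval]
      simp [cPr0]
  · refine ⟨fun hc => ?_, Or.inr (Subtype.ext ?_)⟩
    · rw [Subtype.ext_iff, hval, Prod.mk.injEq] at hc
      omega
    · rw [cPr_val, hval]
      simp [cPr0]
  · intro hc
    rw [Subtype.ext_iff, Prod.mk.injEq] at hc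
    omega

/-- Non-tip pendant vertices have degree at least 2. -/
lemma cDeg_pendant {k b : ℕ} (v : cV k b) (hv : 1 ≤ v.1.1)
    (h2 : v.1.2 < k) : 2 ≤ (cG k b).udeg v := by
  obtain ⟨⟨a, t⟩, hm⟩ := v
  simp only at hv h2
  have hmS := hm
  rw [mem_cS] at hmS
  have hat : 1 ≤ t ∧ a ≤ b := by
    rcases hmS with ⟨h, _⟩ | ⟨_, h3, h4, _⟩
    · omega
    · exact ⟨h4, h3⟩
  have hm2 : ((a, t + 1) : ℕ × ℕ) ∈ cS k b := by
    rw [mem_cS]; right; exact ⟨hv, hat.2, by omega, by omega⟩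
  refine two_le_ncard (a := cPr k b ⟨(a, t), hm⟩)
    (b := (⟨(a, t + 1), hm2⟩ : cV k b)) ?_ ?_ ?_
  · have hne : (⟨(a, t), hm⟩ : cV k b) ≠ cRoot k b := by
      intro hc
      rw [Subtype.ext_iff, Prod.mk.injEq] at hc
      simp only [cRoot] at hc
      omega
    have := cPr_dec (k := k) (b := b) (by omega) ⟨(a, t), hm⟩ hne
    exact ⟨fun hc => by rw [← hc] at this; exact lt_irrefl _ this, Or.inl rfl⟩
  · refine ⟨fun hc => ?_, Or.inr (Subtype.ext ?_)⟩
    · rw [Subtype.ext_iff, Prod.mk.injEq] at hc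
      omega
    · rw [cPr_val]
      simp only [cPr0]
      rw [if_neg (by omega), if_neg (by omega)]
      simp
  · intro hc
    have h3 : cH k (cPr k b ⟨(a, t), hm⟩) < cH k (⟨(a, t), hm⟩ : cV k b) := by
      apply cPr_dec (by omega)
      intro hc2
      rw [Subtype.ext_iff, Prod.mk.injEq] at hc2
      simp only [cRoot] at hc2
      omega
    rw [hc] at h3
    simp only [cH] at h3
    omega

/-- The cover set: the two spine endpoints and the pendant tips. -/
def cP (k b : ℕ) : Set (cV k b) :=
  {v | v.1 = (0, 0) ∨ v.1 = (0, (b + 1) * k) ∨ (1 ≤ v.1.1 ∧ v.1.2 = k)}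

/-- Adjacency from a pendant vertex stays in the pendant or goes to the junction. -/
lemma cAdj_pendant {k b : ℕ} {u w : cV k b} (h : (cG k b).Adj u w)
    (hj : 1 ≤ u.1.1) : w.1.1 = u.1.1 ∨ w.1 = (0, u.1.1 * k) := by
  obtain ⟨⟨a, t⟩, hm⟩ := u
  obtain ⟨⟨c, s⟩, hm'⟩ := w
  simp only at hj ⊢
  rcases h with ⟨hne, h | h⟩
  · rw [Subtype.ext_iff, cPr_val] at h
    simp only [cPr0] at h
    rw [if_neg (by omega)] at h
    split_ifs at h with h2
    · right
      rw [← h]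
    · left
      injection h with h1 h2
      omega
  · rw [Subtype.ext_iff, cPr_val] at h
    simp only [cPr0] at h
    split_ifs at h with h1 h2
    · exfalso
      rw [Prod.ext_iff] at h
      simp only at h
      omega
    · exfalso
      rw [Prod.ext_iff] at h
      simp only at h
      omega
    · left
      rw [Prod.ext_iff] at h
      simp only at h
      omega

/-- Adjacent spine vertices are at distance one. -/
lemma cAdj_spine {k b : ℕ} {u w : cV k b} (h : (cG k b).Adj u w)
    (hu : u.1.1 = 0) (hw : w.1.1 = 0) :
    w.1.2 + 1 = u.1.2 ∨ u.1.2 + 1 = w.1.2 := by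
  obtain ⟨⟨a, t⟩, hm⟩ := u
  obtain ⟨⟨c, s⟩, hm'⟩ := w
  simp only at hu hw ⊢
  subst hu hw
  have hne' : t ≠ s := by
    intro hc
    subst hc
    exact h.ne (Subtype.ext rfl)
  rcases h with ⟨hne, h | h⟩
  · left
    rw [Subtype.ext_iff, cPr_val, cPr0_spine] at h
    injection h with h1 h2
    omega
  · right
    rw [Subtype.ext_iff, cPr_val, cPr0_spine] at h
    injection h with h1 h2
    omega

/-- Every path on `k` vertices contains a branching vertex or a cover vertex. -/
lemma cCover {k b : ℕ} (hk : 2 ≤ k) (p : ℕ → cV k b)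
    (hp : (cG k b).IsUPath k p) :
    (∃ m < k, 3 ≤ (cG k b).udeg (p m)) ∨ (∃ m < k, p m ∈ cP k b) := by
  obtain ⟨hadj, hinj⟩ := hp
  by_cases hbr : ∃ m, m < k ∧ ∃ j, 1 ≤ j ∧ j ≤ b ∧ (p m).1 = (0, j * k)
  · obtain ⟨m, hm, j, hj1, hjb, hv⟩ := hbr
    exact Or.inl ⟨m, hm, cDeg_junction hk hj1 hjb _ hv⟩
  push_neg at hbr
  right
  by_cases hpend : ∃ m, m < k ∧ 1 ≤ (p m).1.1
  · -- the path lives inside one pendant leg; it must contain the tip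
    obtain ⟨m0, hm0, hj⟩ := hpend
    set j := (p m0).1.1 with hjdef
    have hjb : j ≤ b := by
      have hm := (p m0).2
      rw [mem_cS] at hm
      rcases hm with ⟨h, _⟩ | ⟨_, h, _, _⟩
      · omega
      · omega
    have step : ∀ m, m + 1 < k →
        ((p m).1.1 = j → (p (m + 1)).1.1 = j) ∧
        ((p (m + 1)).1.1 = j → (p m).1.1 = j) := by
      intro m hm
      constructor
      · intro he
        rcases cAdj_pendant (hadj m hm) (by omega) with h | h
        · rw [h, he]
        · exact absurd (by rw [h, he]) (hbr (m + 1) hm j (by omega) hjb)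
      · intro he
        rcases cAdj_pendant (hadj m hm).symm (by omega) with h | h
        · rw [h, he]
        · exact absurd (by rw [h, he]) (hbr m (by omega) j (by omega) hjb)
    have hall : ∀ m, m < k → (p m).1.1 = j := by
      have fwd : ∀ d, m0 + d < k → (p (m0 + d)).1.1 = j := by
        intro d
        induction d with
        | zero => intro _; exact hjdef.symm
        | succ d ih =>
          intro h
          have h2 := (step (m0 + d) (by omega)).1 (ih (by omega))
          have he : m0 + (d + 1) = m0 + d + 1 := by omega
          rwa [he]
      have bwd : ∀ d, d ≤ m0 → (p (m0 - d)).1.1 = j := by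
        intro d
        induction d with
        | zero => intro _; simpa using hjdef.symm
        | succ d ih =>
          intro h
          have he : m0 - (d + 1) + 1 = m0 - d := by omega
          have h2 := (step (m0 - (d + 1)) (by omega)).2
          rw [he] at h2
          exact h2 (ih (by omega))
      intro m hm
      rcases le_or_gt m0 m with h | h
      · have := fwd (m - m0) (by omega)
        rwa [Nat.add_sub_cancel' h] at this
      · have := bwd (m0 - m) (by omega)
        have he : m0 - (m0 - m) = m := by omega
        rwa [he] at this
    -- second coordinates are k distinct values in [1, k]
    have hinj2 : Set.InjOn (fun m => (p m).1.2) ↑(Finset.range k) := by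
      intro m hm m' hm' he
      simp only [Finset.coe_range, Set.mem_Iio] at hm hm'
      apply hinj m m' hm hm'
      apply Subtype.ext
      rw [Prod.ext_iff]
      exact ⟨by rw [hall m hm, hall m' hm'], he⟩
    have hcard : ((Finset.range k).image (fun m => (p m).1.2)).card = k := by
      rw [Finset.card_image_of_injOn hinj2, Finset.card_range]
    have hsub : (Finset.range k).image (fun m => (p m).1.2) ⊆ Finset.Icc 1 k := by
      intro x hx
      simp only [Finset.mem_image, Finset.mem_range] at hx
      obtain ⟨m, hm, rfl⟩ := hx
      have hmem := (p m).2
      rw [mem_cS] at hmem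
      have h1 : 1 ≤ (p m).1.1 := by rw [hall m hm]; omega
      rcases hmem with ⟨h, _⟩ | ⟨_, _, h3, h4⟩
      · omega
      · exact Finset.mem_Icc.mpr ⟨h3, h4⟩
    have heq : (Finset.range k).image (fun m => (p m).1.2) = Finset.Icc 1 k :=
      Finset.eq_of_subset_of_card_le hsub (by rw [hcard, Nat.card_Icc]; omega)
    have hkmem : k ∈ (Finset.range k).image (fun m => (p m).1.2) := by
      rw [heq]
      exact Finset.mem_Icc.mpr ⟨by omega, le_refl k⟩
    simp only [Finset.mem_image, Finset.mem_range] at hkmem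
    obtain ⟨m, hm, he⟩ := hkmem
    exact ⟨m, hm, Or.inr (Or.inr ⟨by rw [hall m hm]; omega, he⟩)⟩
  · -- the path lives on the spine; it must contain an endpoint (or a junction)
    push_neg at hpend
    have hsp : ∀ m, m < k → (p m).1.1 = 0 := by
      intro m hm
      have := hpend m hm
      omega
    have step : ∀ m, m + 1 < k →
        ((p (m + 1)).1.2 + 1 = (p m).1.2 ∨ (p m).1.2 + 1 = (p (m + 1)).1.2) :=
      fun m hm => cAdj_spine (hadj m hm) (hsp m (by omega)) (hsp (m + 1) hm)
    have spread : ∀ d m, m + d < k →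
        (p (m + d)).1.2 ≤ (p m).1.2 + d ∧ (p m).1.2 ≤ (p (m + d)).1.2 + d := by
      intro d
      induction d with
      | zero => intro m _; simp
      | succ d ih =>
        intro m hm
        have h1 := ih m (by omega)
        have h2 := step (m + d) (by omega)
        have he : m + (d + 1) = m + d + 1 := by omega
        rw [he]
        omega
    have hainj : ∀ m m', m < k → m' < k → (p m).1.2 = (p m').1.2 → m = m' := by
      intro m m' hm hm' he
      apply hinj m m' hm hm'
      apply Subtype.ext
      rw [Prod.ext_iff]
      exact ⟨by rw [hsp m hm, hsp m' hm'], he⟩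
    set F := (Finset.range k).image (fun m => (p m).1.2) with hF
    have hFcard : F.card = k := by
      rw [hF, Finset.card_image_of_injOn, Finset.card_range]
      intro m hm m' hm' he
      simp only [Finset.coe_range, Set.mem_Iio] at hm hm'
      exact hainj m m' hm hm' he
    have hFne : F.Nonempty := by
      rw [← Finset.card_pos, hFcard]
      omega
    set c := F.min' hFne with hc
    have hub : ∀ x ∈ F, x ≤ c + (k - 1) := by
      intro x hx
      obtain ⟨m, hm, he⟩ := Finset.mem_image.mp hx
      rw [Finset.mem_range] at hm
      have he2 : (p m).1.2 = x := he
      have hcF := F.min'_mem hFne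
      obtain ⟨mc, hmc, hec⟩ := Finset.mem_image.mp hcF
      rw [Finset.mem_range] at hmc
      have hec2 : (p mc).1.2 = c := hec
      rcases le_or_gt mc m with hle | hlt
      · have h3 := spread (m - mc) mc (by omega)
        have he3 : mc + (m - mc) = m := by omega
        rw [he3] at h3
        omega
      · have h3 := spread (mc - m) m (by omega)
        have he3 : m + (mc - m) = mc := by omega
        rw [he3] at h3
        omega
    have hFsub : F ⊆ Finset.Icc c (c + (k - 1)) := by
      intro x hx
      exact Finset.mem_Icc.mpr ⟨F.min'_le x hx, hub x hx⟩
    have hFeq : F = Finset.Icc c (c + (k - 1)) :=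
      Finset.eq_of_subset_of_card_le hFsub (by rw [hFcard, Nat.card_Icc]; omega)
    have hM : ∀ m, m < k → (p m).1.2 ≤ (b + 1) * k := by
      intro m hm
      have hmem := (p m).2
      rw [mem_cS] at hmem
      have := hsp m hm
      rcases hmem with ⟨_, h⟩ | ⟨h, _, _, _⟩
      · exact h
      · omega
    -- there is a multiple of k among the k consecutive values
    obtain ⟨j, r, hjr, hr⟩ : ∃ j r, c + k - 1 = k * j + r ∧ r < k :=
      ⟨(c + k - 1) / k, (c + k - 1) % k, ((Nat.div_add_mod _ k).symm),
        Nat.mod_lt _ (by omega)⟩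
    have h1 : c ≤ k * j := by omega
    have h2 : k * j ≤ c + (k - 1) := by omega
    have hmemF : k * j ∈ F := by
      rw [hFeq]
      exact Finset.mem_Icc.mpr ⟨h1, h2⟩
    obtain ⟨m, hm, he⟩ := Finset.mem_image.mp hmemF
    rw [Finset.mem_range] at hm
    have he2 : (p m).1.2 = k * j := he
    -- the top of the window is attained, so k * j ≤ (b+1) * k
    have htop : c + (k - 1) ∈ F := by
      rw [hFeq]
      exact Finset.mem_Icc.mpr ⟨by omega, le_refl _⟩
    obtain ⟨m', hm', he'⟩ := Finset.mem_image.mp htop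
    rw [Finset.mem_range] at hm'
    have he'2 : (p m').1.2 = c + (k - 1) := he'
    have hjle : k * j ≤ (b + 1) * k := by
      have := hM m' hm'
      omega
    have hjb1 : j ≤ b + 1 := by
      have h4 : k * j ≤ k * (b + 1) := by rwa [mul_comm k (b + 1)]
      exact Nat.le_of_mul_le_mul_left h4 (by omega)
    have hmul : k * j = j * k := mul_comm k j
    rcases Nat.lt_or_ge j 1 with hj0 | hj1
    · -- j = 0 : the root is on the path
      have hj00 : j = 0 := by omega
      subst hj00
      refine ⟨m, hm, Or.inl ?_⟩
      apply Prod.ext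
      · exact hsp m hm
      · simp only
        omega
    · rcases Nat.lt_or_ge j (b + 1) with hjmid | hjtop
      · -- junction on the path : contradiction with hbr
        exfalso
        apply hbr m hm j hj1 (by omega)
        apply Prod.ext
        · exact hsp m hm
        · simp only
          omega
      · -- j = b + 1 : the spine top is on the path
        have hjeq : j = b + 1 := by omega
        subst hjeq
        have hmul2 : (b + 1) * k = k * (b + 1) := mul_comm _ _
        refine ⟨m, hm, Or.inr (Or.inl ?_)⟩
        apply Prod.ext
        · exact hsp m hm
        · simp only
          omega

/-- Vertices of degree at most one belong to the cover. -/
lemma cLow {k b : ℕ} (hk : 2 ≤ k) (v : cV k b) (hd : (cG k b).udeg v ≤ 1) :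
    v ∈ cP k b := by
  by_contra hv
  simp only [cP, Set.mem_setOf_eq, not_or, not_and] at hv
  obtain ⟨h1, h2, h3⟩ := hv
  have hm := v.2
  rw [mem_cS] at hm
  rcases Nat.lt_or_ge v.1.1 1 with ha | ha
  · -- spine
    have ha0 : v.1.1 = 0 := by omega
    have ht1 : 1 ≤ v.1.2 := by
      rcases Nat.eq_zero_or_pos v.1.2 with h | h
      · exact absurd (Prod.ext ha0 h) h1
      · exact h
    have ht2 : v.1.2 < (b + 1) * k := by
      have hle : v.1.2 ≤ (b + 1) * k := by
        rcases hm with ⟨_, h⟩ | ⟨h, _, _, _⟩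
        · exact h
        · omega
      rcases Nat.lt_or_ge v.1.2 ((b + 1) * k) with h | h
      · exact h
      · exact absurd (Prod.ext ha0 (by omega)) h2
    have := cDeg_spine v ha0 ht1 ht2
    omega
  · -- pendant
    have htk : v.1.2 ≤ k := by
      rcases hm with ⟨h, _⟩ | ⟨_, _, _, h⟩
      · omega
      · exact h
    have htlt : v.1.2 < k := by
      rcases Nat.lt_or_ge v.1.2 k with h | h
      · exact h
      · exact absurd (by omega) (h3 ha)
    have := cDeg_pendant v ha htlt
    omega

/-- The cover has `b + 2` elements. -/
lemma cP_ncard {k b : ℕ} (hk : 2 ≤ k) : (cP k b).ncard = b + 2 := by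
  have hinj : Function.Injective (Subtype.val : cV k b → ℕ × ℕ) :=
    Subtype.val_injective
  have himg : Subtype.val '' (cP k b) =
      (insert ((0 : ℕ), (0 : ℕ)) {((0 : ℕ), (b + 1) * k)}) ∪
        (fun j => (j, k)) '' ↑(Finset.Icc 1 b) := by
    ext x
    simp only [Set.mem_image, Set.mem_union, Set.mem_insert_iff,
      Set.mem_singleton_iff, Finset.coe_Icc, Set.mem_Icc]
    constructor
    · rintro ⟨v, hv, rfl⟩
      rcases hv with h | h | ⟨h1, h2⟩
      · exact Or.inl (Or.inl h)
      · exact Or.inl (Or.inr h)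
      · right
        refine ⟨v.1.1, ⟨h1, ?_⟩, ?_⟩
        · have hm := v.2
          rw [mem_cS] at hm
          rcases hm with ⟨h, _⟩ | ⟨_, h, _, _⟩
          · omega
          · exact h
        · exact Prod.ext rfl h2.symm
    · rintro ((h | h) | ⟨j, ⟨hj1, hjb⟩, rfl⟩)
      · exact ⟨⟨(0, 0), by rw [mem_cS]; left; exact ⟨rfl, Nat.zero_le _⟩⟩,
          Or.inl rfl, by rw [h]⟩
      · exact ⟨⟨(0, (b + 1) * k), by rw [mem_cS]; left; exact ⟨rfl, le_refl _⟩⟩,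
          Or.inr (Or.inl rfl), by rw [h]⟩
      · exact ⟨⟨(j, k), by rw [mem_cS]; right; exact ⟨hj1, hjb, by omega, le_refl k⟩⟩,
          Or.inr (Or.inr ⟨hj1, rfl⟩), rfl⟩
  have hM0 : 0 < (b + 1) * k := Nat.mul_pos (by omega) (by omega)
  have hcalc : (Subtype.val '' (cP k b)).ncard = b + 2 := by
    rw [himg]
    rw [Set.ncard_union_eq]
    · rw [Set.ncard_insert_of_notMem
        (by intro hc; rw [Set.mem_singleton_iff, Prod.mk.injEq] at hc; omega)
        (Set.toFinite _),
        Set.ncard_singleton,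
        Set.ncard_image_of_injective _ (fun a a' h => by injection h),
        Set.ncard_coe_finset, Nat.card_Icc]
      omega
    · rw [Set.disjoint_left]
      rintro x hx ⟨j, hj, rfl⟩
      simp only [Finset.coe_Icc, Set.mem_Icc] at hj
      simp only [Set.mem_insert_iff, Set.mem_singleton_iff, Prod.mk.injEq] at hx
      omega
  rw [← hcalc, Set.ncard_image_of_injective _ hinj]

end Caterpillar

/-- Tightness of the undirected lower bound: for every `k ≥ 2` and `i ≥ 1` there is a
tree on `n = k(2i-1)+1` vertices with a branching `k`-path vertex cover of size
`i + 1 = (n + 3k - 1)/(2k)`. -/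
theorem stmt3 (k i : ℕ) (hk : 2 ≤ k) (hi : 1 ≤ i) :
    ∃ (V : Type) (_ : Fintype V) (G : SimpleGraph V) (P : Set V),
      G.IsTree ∧ Nat.card V = k * (2 * i - 1) + 1 ∧ G.IsBPVC k P ∧
      P.ncard = i + 1 := by
  obtain ⟨b, rfl⟩ : ∃ b, i = b + 1 := ⟨i - 1, by omega⟩
  refine ⟨cV k b, inferInstance, cG k b, cP k b, cG_isTree (by omega), ?_, ?_, ?_⟩
  · rw [cV_card]
    have h2 : 2 * (b + 1) - 1 = 2 * b + 1 := by omega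
    rw [h2]
    ring
  · exact ⟨fun v hv => cLow hk v hv, fun p hp => cCover hk p hp⟩
  · rw [cP_ncard hk]
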